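/- Assume 𝔡 = ω₁. Let ⟨A_n : n < ω⟩ be an increasing sequence of subsets of ω with each A_{n+1} \ A_n infinite and union ω. Then there is a <*-increasing sequence ⟨f_β : β < ω₁⟩ of functions from ω to the ordinals such that for every n, the constant function ω₁·ω₁ restricted to A_n is an exact upper bound of ⟨f_β ↾ A_n : β < ω₁⟩, yet for every σ ∈ ω→ω there exists ξ < ω₁ such that for all β < ω₁, the constant function ω₁·ξ restricted to B_σ is not eventually dominated by f_β ↾ B_σ, where B_σ = ⋃_n {i ∈ A_n : i ≥ i^n_{σ(n)}} and ⟨i^n_k⟩ enumerates A_n increasingly. -/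

import Mathlib

open Cardinal Ordinal

/-- `u <* v`: eventual strict domination on `ℕ → ℕ`. -/
def ltStarN (u v : ℕ → ℕ) : Prop := {n | v n ≤ u n}.Finite

/-- The dominating number 𝔡. -/
noncomputable def dominatingNumber : Cardinal.{0} :=
  sInf {c | ∃ F : Set (ℕ → ℕ), #F = c ∧ ∀ g : ℕ → ℕ, ∃ f ∈ F, ltStarN g f}

/-- mod-finite domination on a set `S ⊆ ℕ`. -/
def ltStarOn (S : Set ℕ) (u v : ℕ → Ordinal) : Prop := {i | i ∈ S ∧ ¬ u i < v i}.Finite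

/-- `B_σ = ⋃_n {i ∈ A_n : i ≥ i^n_{σ(n)}}`. -/
def Bset (A : ℕ → Set ℕ) (σ : ℕ → ℕ) : Set ℕ :=
  ⋃ n, {i | i ∈ A n ∧ Nat.nth (· ∈ A n) (σ n) ≤ i}

noncomputable section

namespace S8

open Set Classical

universe u v

/-- ω₁ as an ordinal. -/
abbrev W : Ordinal.{u} := (Cardinal.aleph 1).ord

lemma card_le_of_lt_W {β : Ordinal} (h : β < W) : β.card ≤ ℵ₀ := by
  have h1 : β.card < ℵ₁ := Cardinal.lt_ord.1 h
  rwa [← Cardinal.succ_aleph0, Order.lt_succ_iff] at h1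

lemma lt_W_of_card {β : Ordinal} (h : β.card ≤ ℵ₀) : β < W :=
  Cardinal.lt_ord.2 (h.trans_lt Cardinal.aleph0_lt_aleph_one)

lemma W_pos : (0 : Ordinal) < W :=
  lt_W_of_card (by simp)

lemma add_lt_W {a b : Ordinal} (ha : a < W) (hb : b < W) : a + b < W := by
  apply lt_W_of_card
  rw [Ordinal.card_add]
  exact (add_le_add (card_le_of_lt_W ha) (card_le_of_lt_W hb)).trans
    (by simpa using Cardinal.add_le_aleph0.2 ⟨le_rfl, le_rfl⟩)

lemma one_lt_W : (1 : Ordinal) < W := lt_W_of_card (by simp)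

lemma natcast_lt_W (n : ℕ) : (n : Ordinal) < W :=
  lt_W_of_card (by rw [Ordinal.card_nat]; exact (Cardinal.nat_lt_aleph0 n).le)

lemma cof_W : W.cof = ℵ₁ := Cardinal.isRegular_aleph_one.cof_eq

/-- Countability of initial segments of ω₁. -/
lemma countable_Iio {β : Ordinal} (h : β < W) : Countable (Set.Iio β) := by
  rw [← Cardinal.mk_le_aleph0_iff, Ordinal.mk_Iio_ordinal, Cardinal.lift_le_aleph0]
  exact card_le_of_lt_W h

/-- A key ordinal inequality: `ω₁·v₁ + t₁ < ω₁·v₂ + t₂` when `v₁ < v₂`, `t₁ < ω₁`. -/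
lemma mul_add_lt {v1 v2 t1 t2 : Ordinal} (ht1 : t1 < W) (hv : v1 < v2) :
    W * v1 + t1 < W * v2 + t2 := by
  have h1 : W * v1 + t1 < W * v1 + W := by
    exact add_lt_add_right ht1 _
  have h2 : W * v1 + W = W * (v1 + 1) := by
    rw [Ordinal.add_one_eq_succ, Ordinal.mul_succ]
  have h3 : W * (v1 + 1) ≤ W * v2 :=
    mul_le_mul_right (by rwa [Ordinal.add_one_eq_succ, Order.succ_le_iff]) _
  calc W * v1 + t1 < W * (v1 + 1) := h2 ▸ h1
    _ ≤ W * v2 := h3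
    _ ≤ W * v2 + t2 := le_self_add

lemma mul_add_lt_mul {v t : Ordinal} (ht : t < W) : W * v + t < W * (v + 1) := by
  rw [Ordinal.add_one_eq_succ, Ordinal.mul_succ]
  exact add_lt_add_right ht _

section Main

variable (A : ℕ → Set ℕ) (hc : ∀ i : ℕ, ∃ n, i ∈ A n)

/-- the birth level of `i`: least `n` with `i ∈ A n`. -/
def lvl (i : ℕ) : ℕ := Nat.find (hc i)

lemma lvl_mem (i : ℕ) : i ∈ A (lvl A hc i) := Nat.find_spec (hc i)

lemma lvl_le {i n : ℕ} (h : i ∈ A n) : lvl A hc i ≤ n := Nat.find_le h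

lemma lvl_not_mem {i k : ℕ} (h : k < lvl A hc i) : i ∉ A k := Nat.find_min (hc i) h

/-- deep-born points with respect to a threshold function `g`. -/
def Dset (g : ℕ → ℕ) : Set ℕ :=
  {i | 1 ≤ lvl A hc i ∧ Nat.nth (· ∈ A (lvl A hc i)) (g (lvl A hc i)) ≤ i}

lemma Achain (hmono : ∀ n, A n ⊆ A (n + 1)) {k l : ℕ} (h : k ≤ l) : A k ⊆ A l := by
  induction h with
  | refl => exact subset_rfl
  | step _ ih => exact ih.trans (hmono _)

lemma lvl_eq_of_newborn (hmono : ∀ n, A n ⊆ A (n + 1)) {i m : ℕ}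
    (h1 : i ∈ A (m + 1)) (h2 : i ∉ A m) :
    lvl A hc i = m + 1 := by
  apply le_antisymm (lvl_le A hc h1)
  by_contra hcon
  push_neg at hcon
  exact h2 (Achain A hmono (Nat.lt_succ_iff.1 hcon) (lvl_mem A hc i))

lemma A_infinite (hinf : ∀ n, (A (n + 1) \ A n).Infinite) {m : ℕ} (hm : 1 ≤ m) :
    (A m).Infinite := by
  obtain ⟨k, rfl⟩ := Nat.exists_eq_add_of_le hm
  refine ((hinf k).mono ?_)
  intro x hx
  have : x ∈ A (k + 1) := (Set.diff_subset) hx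
  simpa [Nat.add_comm] using this

/-- spread: deep-born points beyond any level bound form an infinite set. -/
lemma Dset_spread (hmono : ∀ n, A n ⊆ A (n + 1)) (hinf : ∀ n, (A (n + 1) \ A n).Infinite)
    (g : ℕ → ℕ) (j : ℕ) :
    {i | i ∈ Dset A hc g ∧ j < lvl A hc i}.Infinite := by
  set m := j + 1 with hm
  set c := Nat.nth (· ∈ A m) (g m) with hcn
  have hL : ((A m \ A j) \ {i | i < c}).Infinite :=
    (hinf j).diff (Set.finite_lt_nat c)
  apply hL.mono
  rintro i ⟨⟨hi1, hi2⟩, hi3⟩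
  have hlvl : lvl A hc i = m := lvl_eq_of_newborn A hc hmono hi1 hi2
  simp only [Set.mem_setOf_eq] at hi3
  push_neg at hi3
  refine ⟨⟨by omega, ?_⟩, by omega⟩
  rw [hlvl]
  exact hi3

/-- deep-born points beyond a dominator of σ are in `Bset A σ`. -/
lemma Dset_subset_B (hinf : ∀ n, (A (n + 1) \ A n).Infinite)
    {σ g : ℕ → ℕ} {M : ℕ} (hσ : ∀ m, M ≤ m → σ m < g m)
    {i : ℕ} (hi : i ∈ Dset A hc g) (hM : M < lvl A hc i) : i ∈ Bset A σ := by
  obtain ⟨h1, h2⟩ := hi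
  set m := lvl A hc i with hm
  have hAinf : {x | x ∈ A m}.Infinite := by
    simpa [Set.setOf_mem_eq] using A_infinite A hinf (m := m) h1
  apply Set.mem_iUnion.2 ⟨m, ?_⟩
  refine ⟨lvl_mem A hc i, ?_⟩
  calc Nat.nth (· ∈ A m) (σ m) ≤ Nat.nth (· ∈ A m) (g m) := by
        exact (Nat.nth_le_nth hAinf).2 (le_of_lt (hσ m (le_of_lt hM)))
    _ ≤ i := h2

variable (fam : Ordinal.{u} → ℕ → ℕ) (nm : Ordinal.{v} → ℕ) (zm : Ordinal.{v} → Ordinal.{u})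

/-- stage data for the transfinite recursion -/
structure St : Type (u + 1) where
  val : ℕ → Ordinal.{u}
  tie : ℕ → ℕ
  V : Ordinal.{u} → Set ℕ
  th : Ordinal.{u}

instance : Inhabited St := ⟨⟨fun _ => 0, fun _ => 0, fun _ => ∅, 0⟩⟩

/-- the invariants of a good stage -/
structure Good (β : Ordinal.{v}) (prev : ∀ α, α < β → St) (s : St) : Prop where
  g1 : s.th < W
  g2 : zm β < s.th
  g3 : ∀ α h, (prev α h).th < s.th
  g4 : ∀ i, s.val i ≤ s.th
  g5 : ∀ γ, γ < s.th → s.V γ ⊆ Dset A hc (fam γ)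
  g6 : ∀ γ, γ < s.th → ∀ j : ℕ, {i | i ∈ s.V γ ∧ j < lvl A hc i}.Infinite
  g7 : ∀ γ, γ < s.th → ∀ i ∈ s.V γ, s.val i ≤ γ
  g8 : ∀ γ, γ < s.th → ∀ i ∈ s.V γ, nm β < lvl A hc i
  g9 : ∀ i, lvl A hc i ≤ nm β → s.val i = s.th
  g10 : ∀ α h, ∀ γ, γ < (prev α h).th → (s.V γ \ (prev α h).V γ).Finite
  g11 : ∀ α h, {i | s.val i < (prev α h).val i}.Finite
  g12 : ∀ α h, {m | s.tie m ≤ (prev α h).tie m}.Finite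

/-- the stages, by transfinite recursion -/
def stage : Ordinal.{v} → St :=
  Ordinal.lt_wf.fix fun β ih =>
    if h : ∃ s, Good A hc fam nm zm β ih s then h.choose else default

lemma stage_eq (β : Ordinal.{v}) :
    stage A hc fam nm zm β =
      if h : ∃ s, Good A hc fam nm zm β (fun α _ => stage A hc fam nm zm α) s then
        h.choose else default := by
  conv_lhs => rw [stage, Ordinal.lt_wf.fix_eq]
  rfl


/-- Core lemma: a good stage always exists (given good previous stages). -/
lemma exists_good (hmono : ∀ n, A n ⊆ A (n + 1)) (hinf : ∀ n, (A (n + 1) \ A n).Infinite)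
    (β : Ordinal.{v}) (hβ : β < W.{v}) (hz : zm β < W.{u})
    (prev : ∀ α, α < β → St)
    (hprev : ∀ α (h : α < β),
      Good A hc fam nm zm α (fun α' h' => prev α' (h'.trans h)) (prev α h)) :
    ∃ s, Good A hc fam nm zm β prev s := by
  classical
  -- enumeration of previous stages
  haveI : Countable (Set.Iio β) := countable_Iio hβ
  obtain ⟨E, hE⟩ := exists_surjective_nat (Option (Set.Iio β))
  set stOf : ℕ → St := fun l => (E l).elim default (fun a => prev a.1 a.2) with hstOf
  -- the new threshold
  set Θ0 : Ordinal := ⨆ l : ℕ, (stOf l).th with hΘ0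
  set Θ : Ordinal := Θ0 + (zm β + 1) with hΘ
  have hΘ0W : Θ0 < W.{u} := by
    apply Ordinal.iSup_lt_ord_lift
    · rw [cof_W]
      simp only [Cardinal.mk_nat, Cardinal.lift_aleph0]
      exact Cardinal.aleph0_lt_aleph_one
    · intro l
      rcases hEl : E l with _ | a
      · have : stOf l = default := by rw [hstOf]; simp [hEl]
        rw [this]
        exact W_pos
      · have : stOf l = prev a.1 a.2 := by rw [hstOf]; simp [hEl]
        rw [this]
        exact (hprev a.1 a.2).g1
  have hΘW : Θ < W := add_lt_W hΘ0W (add_lt_W hz one_lt_W)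
  have hle : ∀ α (h : α < β), (prev α h).th ≤ Θ0 := by
    intro α h
    obtain ⟨l, hl⟩ := hE (some ⟨α, h⟩)
    have h2 := Ordinal.le_iSup (fun l : ℕ => (stOf l).th) l
    have h3 : stOf l = prev α h := by rw [hstOf]; simp [hl]
    rw [h3] at h2
    exact h2
  have hpos1 : (0 : Ordinal) < zm β + 1 :=
    lt_of_le_of_lt (zero_le) (by rw [Ordinal.add_one_eq_succ]; exact Order.lt_succ _)
  have hthΘ : ∀ α (h : α < β), (prev α h).th < Θ := by
    intro α h
    refine lt_of_le_of_lt (hle α h) ?_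
    conv_lhs => rw [← add_zero Θ0]
    exact add_lt_add_right hpos1 _
  have hz2 : zm β < Θ := by
    refine lt_of_lt_of_le ?_ (le_add_self (a := zm β + 1) (b := Θ0))
    rw [Ordinal.add_one_eq_succ]; exact Order.lt_succ _
  have hΘpos : (0 : Ordinal) < Θ := lt_of_le_of_lt (zero_le) hz2
  -- enumeration of ordinals below Θ
  haveI : Countable (Set.Iio Θ) := countable_Iio hΘW
  haveI : Nonempty (Set.Iio Θ) := ⟨⟨0, hΘpos⟩⟩
  obtain ⟨eg, heg⟩ := exists_surjective_nat (Set.Iio Θ)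
  set γt : ℕ → Ordinal := fun t => (eg (Nat.unpair t).1).1 with hγtdef
  have hγt : ∀ t, γt t < Θ := fun t => (eg (Nat.unpair t).1).2
  -- guards
  set Gd : Ordinal → ℕ → ℕ → Prop := fun γ t i =>
    ∀ l, l ≤ t → ∀ a : Set.Iio β, E l = some a →
      γ < (prev a.1 a.2).th → i ∈ (prev a.1 a.2).V γ with hGd
  -- the chain lemma
  have hchain : ∀ γ, γ < Θ → ∀ (t j : ℕ),
      {i | i ∈ Dset A hc (fam γ) ∧ Gd γ t i ∧ j < lvl A hc i}.Infinite := by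
    intro γ hγ t j
    by_cases hrel : ∃ l, l ≤ t ∧ ∃ a : Set.Iio β, E l = some a ∧ γ < (prev a.1 a.2).th
    · -- with relevant guards: use the maximal one
      set T : Finset ℕ := (Finset.range (t+1)).filter
        (fun l => ∃ a : Set.Iio β, E l = some a ∧ γ < (prev a.1 a.2).th) with hT
      have hTne : T.Nonempty := by
        obtain ⟨l, hl, a, ha, hth⟩ := hrel
        exact ⟨l, Finset.mem_filter.2 ⟨Finset.mem_range.2 (Nat.lt_succ_of_le hl), a, ha, hth⟩⟩
      set αv : ℕ → Ordinal := fun l => (E l).elim 0 (fun a => a.1) with hαv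
      obtain ⟨l0, hl0T, hl0max⟩ := Finset.mem_image.1 ((T.image αv).max'_mem (hTne.image _))
      obtain ⟨-, a0, ha0, hth0⟩ := Finset.mem_filter.1 hl0T
      have ha0v : αv l0 = a0.1 := by rw [hαv]; simp [ha0]
      -- the per-guard sets
      set VOf : ℕ → Set ℕ := fun l => (E l).elim Set.univ
        (fun a => if γ < (prev a.1 a.2).th then (prev a.1 a.2).V γ else Set.univ) with hVOf
      set Rem : Set ℕ := ⋃ l ∈ (T : Set ℕ), ((prev a0.1 a0.2).V γ \ VOf l) with hRem
      have hRemFin : Rem.Finite := by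
        apply Set.Finite.biUnion T.finite_toSet
        intro l hlT
        obtain ⟨-, a, ha, hth⟩ := Finset.mem_filter.1 hlT
        have hVl : VOf l = (prev a.1 a.2).V γ := by rw [hVOf]; simp [ha, hth]
        rw [hVl]
        have hav : αv l = a.1 := by rw [hαv]; simp [ha]
        have hle' : a.1 ≤ a0.1 := by
          rw [← hav, ← ha0v, hl0max]
          exact Finset.le_max' _ _ (Finset.mem_image_of_mem αv hlT)
        rcases eq_or_lt_of_le hle' with heq | hlt
        · have : a = a0 := Subtype.ext heq
          rw [this]
          simpa using Set.finite_empty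
        · exact (hprev a0.1 a0.2).g10 a.1 hlt γ hth
      have hSrc : {i | i ∈ (prev a0.1 a0.2).V γ ∧ j < lvl A hc i}.Infinite :=
        (hprev a0.1 a0.2).g6 γ hth0 j
      apply (hSrc.diff hRemFin).mono
      rintro i ⟨⟨hiV, hilvl⟩, hiRem⟩
      refine ⟨(hprev a0.1 a0.2).g5 γ hth0 hiV, ?_, hilvl⟩
      intro l hl a ha hth
      have hlT : l ∈ T := Finset.mem_filter.2
        ⟨Finset.mem_range.2 (Nat.lt_succ_of_le hl), a, ha, hth⟩
      have : i ∈ VOf l := by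
        by_contra hcon
        exact hiRem (Set.mem_biUnion hlT ⟨hiV, hcon⟩)
      rw [hVOf] at this
      simpa [ha, hth] using this
    · -- no relevant guards
      apply (Dset_spread A hc hmono hinf (fam γ) j).mono
      rintro i ⟨h1, h2⟩
      exact ⟨h1, fun l hl a ha hth => absurd ⟨l, hl, a, ha, hth⟩ hrel, h2⟩
  -- the diagonal picks
  set Pset : ∀ t : ℕ, (∀ s, s < t → ℕ) → Set ℕ := fun t ih =>
    {i | (i ∈ Dset A hc (fam (γt t)) ∧ Gd (γt t) t i ∧ max (nm β) t < lvl A hc i) ∧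
      ∀ s, ∀ hs : s < t, ih s hs ≠ i} with hPset
  set p : ℕ → ℕ := Nat.lt_wfRel.wf.fix
    (fun t ih => if h : (Pset t ih).Nonempty then h.choose else 0) with hp
  have hpeq : ∀ t, p t = if h : (Pset t (fun s _ => p s)).Nonempty then h.choose else 0 := by
    intro t
    conv_lhs => rw [hp, Nat.lt_wfRel.wf.fix_eq]
  have hPinf : ∀ t, (Pset t (fun s _ => p s)).Infinite := by
    intro t
    have h1 := hchain (γt t) (hγt t) t (max (nm β) t)
    have h2 : Pset t (fun s _ => p s) =
        {i | i ∈ Dset A hc (fam (γt t)) ∧ Gd (γt t) t i ∧ max (nm β) t < lvl A hc i} \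
        {i | ∃ s, s < t ∧ p s = i} := by
      ext i
      simp only [hPset, Set.mem_setOf_eq, Set.mem_diff]
      constructor
      · rintro ⟨h3, h4⟩
        exact ⟨h3, fun ⟨s, hs, hps⟩ => h4 s hs hps⟩
      · rintro ⟨h3, h4⟩
        exact ⟨h3, fun s hs hps => h4 ⟨s, hs, hps⟩⟩
    rw [h2]
    apply h1.diff
    apply Set.Finite.subset ((Finset.range t).image p).finite_toSet
    rintro i ⟨s, hs, rfl⟩
    simp only [Finset.coe_image, Set.mem_image, Finset.mem_coe, Finset.mem_range]
    exact ⟨s, hs, rfl⟩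
  have hmem : ∀ t, p t ∈ Pset t (fun s _ => p s) := by
    intro t
    rw [hpeq t, dif_pos (hPinf t).nonempty]
    exact (hPinf t).nonempty.choose_spec
  have hpD : ∀ t, p t ∈ Dset A hc (fam (γt t)) := fun t => (hmem t).1.1
  have hpGd : ∀ t, Gd (γt t) t (p t) := fun t => (hmem t).1.2.1
  have hplvl : ∀ t, max (nm β) t < lvl A hc (p t) := fun t => (hmem t).1.2.2
  have hpnew : ∀ t s, s < t → p s ≠ p t := fun t s hs => (hmem t).2 s hs
  have hpinj : Function.Injective p := by
    intro s t hst
    rcases lt_trichotomy s t with h | h | h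
    · exact absurd hst (hpnew t s h)
    · exact h
    · exact absurd hst.symm (hpnew s t h)
  -- the new stage
  set valf : ℕ → Ordinal := fun i => if h : ∃ t, p t = i then γt h.choose else Θ with hvalf
  set tief : ℕ → ℕ := fun m => ((Finset.range (m+1)).sup fun l => (stOf l).tie m) + 1 with htief
  set Vf : Ordinal → Set ℕ := fun γ => {i | ∃ t, p t = i ∧ γt t = γ} with hVf
  have hval_p : ∀ t, valf (p t) = γt t := by
    intro t
    have hex : ∃ t', p t' = p t := ⟨t, rfl⟩
    have h1 : valf (p t) = γt hex.choose := dif_pos hex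
    rw [h1, hpinj hex.choose_spec]
  have hval_np : ∀ i, (¬ ∃ t, p t = i) → valf i = Θ := fun i h => dif_neg h
  have hval_le : ∀ i, valf i ≤ Θ := by
    intro i
    by_cases h : ∃ t, p t = i
    · obtain ⟨t, rfl⟩ := h
      rw [hval_p t]
      exact (hγt t).le
    · rw [hval_np i h]
  refine ⟨⟨valf, tief, Vf, Θ⟩, ?_, hz2, hthΘ, hval_le, ?_, ?_, ?_, ?_, ?_, ?_, ?_, ?_⟩
  · exact hΘW
  · -- g5
    intro γ hγ i hi
    obtain ⟨t, rfl, rfl⟩ := hi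
    exact hpD t
  · -- g6
    intro γ hγ j
    obtain ⟨j0, hj0⟩ := heg ⟨γ, hγ⟩
    have hkey : ∀ s : ℕ, γt (Nat.pair j0 s) = γ := by
      intro s
      rw [hγtdef]
      simp only [Nat.unpair_pair, hj0]
    apply Set.infinite_of_injective_forall_mem
      (f := fun s : ℕ => p (Nat.pair j0 (s + (j + 1))))
    · intro s1 s2 h12
      have h13 := Nat.pair_eq_pair.1 (hpinj h12)
      omega
    · intro s
      refine ⟨⟨Nat.pair j0 (s + (j + 1)), rfl, hkey _⟩, ?_⟩
      have h1 := hplvl (Nat.pair j0 (s + (j + 1)))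
      have h2 : s + (j + 1) ≤ Nat.pair j0 (s + (j + 1)) := Nat.right_le_pair _ _
      omega
  · -- g7
    intro γ hγ i hi
    obtain ⟨t, rfl, rfl⟩ := hi
    show valf (p t) ≤ γt t
    rw [hval_p t]
  · -- g8
    intro γ hγ i hi
    obtain ⟨t, rfl, rfl⟩ := hi
    have := hplvl t
    omega
  · -- g9
    intro i hlvl
    show valf i = Θ
    apply hval_np
    rintro ⟨t, rfl⟩
    have := hplvl t
    omega
  · -- g10
    intro α h γ hγth
    obtain ⟨l0, hl0⟩ := hE (some ⟨α, h⟩)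
    apply Set.Finite.subset ((Finset.range l0).image p).finite_toSet
    rintro i ⟨⟨t, rfl, rfl⟩, hnot⟩
    simp only [Finset.coe_image, Set.mem_image, Finset.mem_coe, Finset.mem_range]
    by_cases hlt : t < l0
    · exact ⟨t, hlt, rfl⟩
    · exfalso
      exact hnot (hpGd t l0 (le_of_not_gt hlt) ⟨α, h⟩ hl0 hγth)
  · -- g11
    intro α h
    obtain ⟨l0, hl0⟩ := hE (some ⟨α, h⟩)
    apply Set.Finite.subset ((Finset.range l0).image p).finite_toSet
    intro i hi
    simp only [Set.mem_setOf_eq] at hi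
    replace hi : valf i < (prev α h).val i := hi
    simp only [Finset.coe_image, Set.mem_image, Finset.mem_coe, Finset.mem_range]
    by_cases hex : ∃ t, p t = i
    · obtain ⟨t, rfl⟩ := hex
      by_cases hlt : t < l0
      · exact ⟨t, hlt, rfl⟩
      · exfalso
        rw [hval_p t] at hi
        by_cases hcase : γt t < (prev α h).th
        · have hmem' := hpGd t l0 (le_of_not_gt hlt) ⟨α, h⟩ hl0 hcase
          exact absurd ((hprev α h).g7 (γt t) hcase _ hmem') (not_le_of_gt hi)
        · have h4 := (hprev α h).g4 ((p t))
          exact absurd (h4.trans (le_of_not_gt hcase)) (not_le_of_gt hi)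
    · exfalso
      rw [hval_np i hex] at hi
      have h4 := (hprev α h).g4 i
      exact absurd (h4.trans (hthΘ α h).le) (not_le_of_gt hi)
  · -- g12
    intro α h
    obtain ⟨l0, hl0⟩ := hE (some ⟨α, h⟩)
    apply Set.Finite.subset (Set.finite_lt_nat l0)
    intro m hm
    simp only [Set.mem_setOf_eq] at hm ⊢
    replace hm : ((Finset.range (m+1)).sup fun l => (stOf l).tie m) + 1 ≤ (prev α h).tie m := hm
    by_contra hcon
    push_neg at hcon
    have hmem' : l0 ∈ Finset.range (m+1) := Finset.mem_range.2 (by omega)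
    have hsup : (stOf l0).tie m ≤ (Finset.range (m+1)).sup fun l => (stOf l).tie m :=
      Finset.le_sup (f := fun l => (stOf l).tie m) hmem'
    have hstOfl0 : stOf l0 = prev α h := by rw [hstOf]; simp [hl0]
    rw [hstOfl0] at hsup
    omega

/-- all stages are good below ω₁ -/
lemma stage_good (hmono : ∀ n, A n ⊆ A (n + 1)) (hinf : ∀ n, (A (n + 1) \ A n).Infinite)
    (hzW : ∀ β, zm β < W.{u}) :
    ∀ β : Ordinal.{v}, β < W.{v} →
      Good A hc fam nm zm β (fun α _ => stage A hc fam nm zm α) (stage A hc fam nm zm β) := by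
  intro β
  induction β using Ordinal.induction with
  | _ β ih =>
    intro hβ
    have hex : ∃ s, Good A hc fam nm zm β (fun α _ => stage A hc fam nm zm α) s :=
      exists_good A hc fam nm zm hmono hinf β hβ (hzW β)
        (fun α _ => stage A hc fam nm zm α) (fun α h => ih α h (h.trans hβ))
    rw [stage_eq, dif_pos hex]
    exact hex.choose_spec

end Main

/-- extraction of an ω₁-indexed dominating family from 𝔡 = ℵ₁. -/
lemma exists_fam (hd : dominatingNumber = Cardinal.aleph 1) :
    ∃ fam : Ordinal.{u} → ℕ → ℕ,
      ∀ σ : ℕ → ℕ, ∃ γ, γ < W ∧ ∃ M : ℕ, ∀ m, M ≤ m → σ m < fam γ m := by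
  classical
  have hne : {c | ∃ F : Set (ℕ → ℕ), #F = c ∧ ∀ g : ℕ → ℕ, ∃ f ∈ F, ltStarN g f}.Nonempty := by
    refine ⟨#(Set.univ : Set (ℕ → ℕ)), Set.univ, rfl, ?_⟩
    intro g
    refine ⟨fun n => g n + 1, Set.mem_univ _, ?_⟩
    simp [ltStarN]
  obtain ⟨F, hF, hdom⟩ : ∃ F : Set (ℕ → ℕ),
      Cardinal.mk F = Cardinal.aleph 1 ∧ ∀ g : ℕ → ℕ, ∃ f ∈ F, ltStarN g f := by
    have h := csInf_mem hne
    rw [show sInf {c | ∃ F : Set (ℕ → ℕ), #F = c ∧ ∀ g : ℕ → ℕ, ∃ f ∈ F, ltStarN g f}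
      = Cardinal.aleph 1 from hd] at h
    exact h
  have hcard : Cardinal.lift.{0} #(W.ToType.{u}) = Cardinal.lift.{u} #(↥F) := by
    rw [Cardinal.mk_toType, Cardinal.card_ord, hF]
    simp [Cardinal.lift_aleph]
  obtain ⟨e2⟩ := Cardinal.lift_mk_eq'.1 hcard
  refine ⟨fun γ =>
    if h : γ < W then ((e2 ((Ordinal.ToType.mk (o := W)) ⟨γ, h⟩)) : ℕ → ℕ) else fun _ => 0, ?_⟩
  intro σ
  obtain ⟨f, hfF, hfd⟩ := hdom (fun m => (Finset.range (m+1)).sup σ)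
  obtain ⟨M0, hM0⟩ := hfd.bddAbove
  set x : W.ToType := e2.symm ⟨f, hfF⟩ with hx
  refine ⟨((Ordinal.ToType.mk (o := W)).symm x).1, ((Ordinal.ToType.mk (o := W)).symm x).2, M0 + 1, ?_⟩
  intro m hm
  have hγpf : (⟨((Ordinal.ToType.mk (o := W)).symm x).1, ((Ordinal.ToType.mk (o := W)).symm x).2⟩ : Set.Iio W)
      = (Ordinal.ToType.mk (o := W)).symm x := rfl
  have hlt : ((Ordinal.ToType.mk (o := W)).symm x).1 < W := ((Ordinal.ToType.mk (o := W)).symm x).2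
  beta_reduce
  rw [dif_pos hlt, hγpf, OrderIso.apply_symm_apply, hx,
    Equiv.apply_symm_apply]
  have hnm : m ∉ {n | f n ≤ (Finset.range (n+1)).sup σ} := by
    intro hcon
    have := hM0 hcon
    omega
  simp only [Set.mem_setOf_eq, not_le] at hnm
  calc σ m ≤ (Finset.range (m+1)).sup σ := Finset.le_sup (Finset.self_mem_range_succ m)
    _ < f m := hnm

/-- a pairing of ω₁ with ℕ × ω₁, used for bookkeeping of the tasks. -/
lemma exists_pair :
    ∃ (nm : Ordinal.{v} → ℕ) (zm : Ordinal.{v} → Ordinal.{u}),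
      (∀ β, zm β < W.{u}) ∧
      ∀ (n : ℕ) (ζ : Ordinal.{u}), ζ < W.{u} → ∃ β, β < W.{v} ∧ nm β = n ∧ zm β = ζ := by
  classical
  have hcard : Cardinal.lift.{u} #(W.{v}.ToType) =
      Cardinal.lift.{v} #(ℕ × W.{u}.ToType) := by
    rw [Cardinal.mk_prod, Cardinal.mk_toType, Cardinal.mk_toType, Cardinal.card_ord,
      Cardinal.card_ord, Cardinal.lift_mul, Cardinal.lift_lift, Cardinal.lift_lift]
    simp only [Cardinal.mk_nat, Cardinal.lift_aleph0, Cardinal.lift_aleph]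
    rw [Cardinal.aleph0_mul_eq (Cardinal.aleph0_le_aleph _)]
    simp
  obtain ⟨e3⟩ := Cardinal.lift_mk_eq'.1 hcard
  refine ⟨fun β => if h : β < W.{v} then (e3 ((Ordinal.ToType.mk (o := W)) ⟨β, h⟩)).1 else 0,
          fun β => if h : β < W.{v} then
            ((Ordinal.ToType.mk (o := W.{u})).symm (e3 ((Ordinal.ToType.mk (o := W)) ⟨β, h⟩)).2).1 else 0,
          ?_, ?_⟩
  · intro β
    by_cases h : β < W.{v}
    · beta_reduce; rw [dif_pos h]; exact ((Ordinal.ToType.mk (o := W.{u})).symm _).2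
    · beta_reduce; rw [dif_neg h]; exact W_pos
  · intro n ζ hζ
    set x : W.{v}.ToType := e3.symm (n, (Ordinal.ToType.mk (o := W.{u})) ⟨ζ, hζ⟩) with hx
    refine ⟨((Ordinal.ToType.mk (o := W.{v})).symm x).1, ((Ordinal.ToType.mk (o := W.{v})).symm x).2, ?_, ?_⟩
    · have hγpf : (⟨((Ordinal.ToType.mk (o := W.{v})).symm x).1, ((Ordinal.ToType.mk (o := W.{v})).symm x).2⟩ :
          Set.Iio W.{v}) = (Ordinal.ToType.mk (o := W.{v})).symm x := rfl
      have hlt : ((Ordinal.ToType.mk (o := W.{v})).symm x).1 < W.{v} := ((Ordinal.ToType.mk (o := W.{v})).symm x).2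
      beta_reduce
      rw [dif_pos hlt, hγpf, OrderIso.apply_symm_apply, hx, Equiv.apply_symm_apply]
    · have hγpf : (⟨((Ordinal.ToType.mk (o := W.{v})).symm x).1, ((Ordinal.ToType.mk (o := W.{v})).symm x).2⟩ :
          Set.Iio W.{v}) = (Ordinal.ToType.mk (o := W.{v})).symm x := rfl
      have hlt : ((Ordinal.ToType.mk (o := W.{v})).symm x).1 < W.{v} := ((Ordinal.ToType.mk (o := W.{v})).symm x).2
      beta_reduce
      rw [dif_pos hlt, hγpf, OrderIso.apply_symm_apply, hx, Equiv.apply_symm_apply]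
      rw [OrderIso.symm_apply_apply]


theorem main (hd : dominatingNumber = Cardinal.aleph 1)
    (A : ℕ → Set ℕ) (hmono : ∀ n, A n ⊆ A (n + 1))
    (hinf : ∀ n, (A (n + 1) \ A n).Infinite)
    (hcover : (⋃ n, A n) = Set.univ) :
    ∃ f : Ordinal.{v} → ℕ → Ordinal.{u},
      (∀ α < (Cardinal.aleph 1).ord, ∀ β < (Cardinal.aleph 1).ord, α < β →
        {i : ℕ | ¬ f α i < f β i}.Finite) ∧
      (∀ n, (∀ β < (Cardinal.aleph 1).ord,
          ltStarOn (A n) (f β) (fun _ => (Cardinal.aleph 1).ord * (Cardinal.aleph 1).ord)) ∧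
        (∀ u : ℕ → Ordinal.{u},
          ltStarOn (A n) u (fun _ => (Cardinal.aleph 1).ord * (Cardinal.aleph 1).ord) →
          ∃ β < (Cardinal.aleph 1).ord, ltStarOn (A n) u (f β))) ∧
      (∀ σ : ℕ → ℕ, ∃ ξ < (Cardinal.aleph 1).ord, ∀ β < (Cardinal.aleph 1).ord,
        ¬ ltStarOn (Bset A σ) (fun _ => (Cardinal.aleph 1).ord * ξ) (f β)) := by
  classical
  have hc : ∀ i : ℕ, ∃ n, i ∈ A n := by
    intro i
    have h1 : i ∈ ⋃ n, A n := by rw [hcover]; trivial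
    exact Set.mem_iUnion.1 h1
  obtain ⟨fam, hfam⟩ := exists_fam.{u} hd
  obtain ⟨nm, zm, hzW, hpair⟩ := exists_pair.{u, v}
  have hgood : ∀ β : Ordinal.{v}, β < W.{v} →
      Good A hc fam nm zm β (fun α _ => stage A hc fam nm zm α)
        (stage A hc fam nm zm β) :=
    stage_good A hc fam nm zm hmono hinf hzW
  set stg := stage A hc fam nm zm with hstg
  refine ⟨fun β i => W.{u} * (stg β).val i + ((stg β).tie i : Ordinal), ?_, ?_, ?_⟩
  · -- (I): <*-increasing
    intro α hα β hβ hαβ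
    have hg := hgood β hβ
    have h11 := hg.g11 α hαβ
    have h12 := hg.g12 α hαβ
    apply Set.Finite.subset (h11.union h12)
    intro i hi
    simp only [Set.mem_setOf_eq] at hi
    rw [Set.mem_union]
    by_contra hcon
    push_neg at hcon
    simp only [Set.mem_setOf_eq] at hcon
    obtain ⟨hc1, hc2⟩ := hcon
    apply hi
    rcases lt_or_eq_of_le (le_of_not_gt hc1) with hv | hv
    · exact mul_add_lt (natcast_lt_W _) hv
    · rw [hv]
      have ht : ((stg α).tie i : Ordinal) < ((stg β).tie i : Ordinal) := by
        exact_mod_cast lt_of_not_ge hc2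
      exact add_lt_add_right ht _
  · -- (II): exact upper bound on each A n
    intro n
    constructor
    · intro β hβ
      apply Set.Finite.subset Set.finite_empty
      intro i hi
      exfalso
      obtain ⟨-, h2⟩ := hi
      apply h2
      have hv : (stg β).val i < W.{u} :=
        lt_of_le_of_lt ((hgood β hβ).g4 i) (hgood β hβ).g1
      calc W.{u} * (stg β).val i + ((stg β).tie i : Ordinal)
          < W.{u} * ((stg β).val i + 1) := mul_add_lt_mul (natcast_lt_W _)
        _ ≤ W.{u} * W.{u} := mul_le_mul_right
            (by rw [Ordinal.add_one_eq_succ, Order.succ_le_iff]; exact hv) _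
    · intro u hu
      set ζ : Ordinal := ⨆ i : ℕ, (if u i < W.{u} * W.{u} then u i / W.{u} + 1 else 0) with hζdef
      have hζW : ζ < W.{u} := by
        apply Ordinal.iSup_lt_ord_lift
        · rw [cof_W]
          simp only [Cardinal.mk_nat, Cardinal.lift_aleph0]
          exact Cardinal.aleph0_lt_aleph_one
        · intro i
          by_cases h : u i < W.{u} * W.{u}
          · simp only [if_pos h]
            apply add_lt_W _ one_lt_W
            rw [Ordinal.div_lt (ne_of_gt W_pos)]
            exact h
          · simp only [if_neg h]; exact W_pos
      obtain ⟨β, hβ, hnm, hzm⟩ := hpair n ζ hζW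
      refine ⟨β, hβ, ?_⟩
      apply Set.Finite.subset hu
      intro i hi
      obtain ⟨hiA, hiu⟩ := hi
      refine ⟨hiA, ?_⟩
      intro hulow
      apply hiu
      have hnm' : lvl A hc i ≤ nm β := by rw [hnm]; exact lvl_le A hc hiA
      have hval : (stg β).val i = (stg β).th := (hgood β hβ).g9 i hnm'
      have hgt : ζ < (stg β).val i := by
        rw [hval, ← hzm]
        exact (hgood β hβ).g2
      have hdiv : u i / W.{u} + 1 ≤ ζ := by
        have h3 := Ordinal.le_iSup
          (fun i : ℕ => if u i < W.{u} * W.{u} then u i / W.{u} + 1 else 0) i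
        rw [if_pos hulow] at h3
        exact h3
      have h5 : u i < W.{u} * (u i / W.{u} + 1) := by
        rw [Ordinal.add_one_eq_succ]
        exact Ordinal.lt_mul_succ_div (u i) (ne_of_gt W_pos)
      calc u i < W.{u} * (u i / W.{u} + 1) := h5
        _ ≤ W.{u} * (stg β).val i := mul_le_mul_right (hdiv.trans hgt.le) _
        _ ≤ W.{u} * (stg β).val i + ((stg β).tie i : Ordinal) := le_self_add
  · -- (III): flatness on B_σ
    intro σ
    obtain ⟨γ, hγ, M, hM⟩ := hfam σ
    refine ⟨γ + 1, add_lt_W hγ one_lt_W, ?_⟩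
    intro β hβ hcon
    have hwit : {i | i ∈ Dset A hc (fam γ) ∧ (stg β).val i ≤ γ ∧ M < lvl A hc i}.Infinite := by
      by_cases hcase : γ < (stg β).th
      · apply ((hgood β hβ).g6 γ hcase M).mono
        rintro i ⟨hiV, hilvl⟩
        exact ⟨(hgood β hβ).g5 γ hcase hiV, (hgood β hβ).g7 γ hcase i hiV, hilvl⟩
      · apply (Dset_spread A hc hmono hinf (fam γ) M).mono
        rintro i ⟨hiD, hilvl⟩
        exact ⟨hiD, ((hgood β hβ).g4 i).trans (le_of_not_gt hcase), hilvl⟩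
    have hsub : {i | i ∈ Dset A hc (fam γ) ∧ (stg β).val i ≤ γ ∧ M < lvl A hc i} ⊆
        {i | i ∈ Bset A σ ∧
          ¬ (fun _ : ℕ => (Cardinal.aleph 1).ord * (γ + 1)) i <
            W.{u} * (stg β).val i + ((stg β).tie i : Ordinal)} := by
      rintro i ⟨hiD, hival, hilvl⟩
      refine ⟨Dset_subset_B A hc hinf hM hiD hilvl, ?_⟩
      intro hlt
      have hflt : W.{u} * (stg β).val i + ((stg β).tie i : Ordinal) < W.{u} * (γ + 1) := by
        calc W.{u} * (stg β).val i + ((stg β).tie i : Ordinal)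
            < W.{u} * ((stg β).val i + 1) := mul_add_lt_mul (natcast_lt_W _)
          _ ≤ W.{u} * (γ + 1) := mul_le_mul_right (add_le_add_left hival 1) _
      exact absurd hlt (asymm hflt)
    exact (hwit.mono hsub) hcon

end S8

end

theorem stmt_8 (hd : dominatingNumber = aleph 1)
    (A : ℕ → Set ℕ) (hmono : ∀ n, A n ⊆ A (n + 1))
    (hinf : ∀ n, (A (n + 1) \ A n).Infinite)
    (hcover : (⋃ n, A n) = Set.univ) :
    ∃ f : Ordinal → ℕ → Ordinal,
      (∀ α < (aleph 1).ord, ∀ β < (aleph 1).ord, α < β →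
        {i : ℕ | ¬ f α i < f β i}.Finite) ∧
      (∀ n, (∀ β < (aleph 1).ord,
          ltStarOn (A n) (f β) (fun _ => (aleph 1).ord * (aleph 1).ord)) ∧
        (∀ u : ℕ → Ordinal, ltStarOn (A n) u (fun _ => (aleph 1).ord * (aleph 1).ord) →
          ∃ β < (aleph 1).ord, ltStarOn (A n) u (f β))) ∧
      (∀ σ : ℕ → ℕ, ∃ ξ < (aleph 1).ord, ∀ β < (aleph 1).ord,
        ¬ ltStarOn (Bset A σ) (fun _ => (aleph 1).ord * ξ) (f β)) :=
  S8.main hd A hmono hinf hcover
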